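/- Proposition (equivalence of KL-greedy and entropy-greedy steps): Let S, A be finite nonempty sets, (λ_k)_{k≥0} positive reals, η_k = 1/λ_k, Z_k = Σ_{j=0}^k η_j, (q_j)_{j≥0} a sequence in ℝ^{S×A}, π_0 the uniform policy, and for each j ≥ 0 let π_{j+1}(a|s) = π_j(a|s) exp(η_j q_j(s,a)) / Σ_b π_j(b|s) exp(η_j q_j(s,b)) (the maximizer of π ↦ ⟨π, q_j⟩ − λ_j KL(π||π_j)). Define h_k = (1/Z_k) Σ_{j=0}^k η_j q_j. Then for every k ≥ 0 and every state s, π_{k+1}(·|s) is the unique maximizer over probability distributions π on A of ⟨π, h_k⟩(s) + (1/Z_k) H(π)(s); equivalently, π_{k+1}(a|s) = exp(Z_k h_k(s,a)) / Σ_b exp(Z_k h_k(s,b)). -/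

import Mathlib

open Finset

lemma gibbs_aux {A : Type*} [Fintype A] [Nonempty A] (f : A → ℝ) (p : A → ℝ)
    (hp : ∀ a, 0 ≤ p a) (hs : ∑ a, p a = 1) :
    ((∑ a, p a * f a) + (-∑ a, p a * Real.log (p a)) ≤
      Real.log (∑ a, Real.exp (f a))) ∧
    ((∑ a, p a * f a) + (-∑ a, p a * Real.log (p a)) =
        Real.log (∑ a, Real.exp (f a)) →
      ∀ a, p a = Real.exp (f a) / ∑ b, Real.exp (f b)) := by
  set σ : ℝ := ∑ a, Real.exp (f a) with hσdef
  have hσ : 0 < σ := Finset.sum_pos (fun a _ => Real.exp_pos _) univ_nonempty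
  set L : A → ℝ := fun a => p a * f a - p a * Real.log (p a) - p a * Real.log σ with hL
  set R : A → ℝ := fun a => Real.exp (f a) / σ - p a with hR
  have key : ∀ a, L a ≤ R a ∧ (p a ≠ Real.exp (f a) / σ → L a < R a) := by
    intro a
    rcases eq_or_lt_of_le (hp a) with h0 | h0
    · constructor
      · simp [hL, hR, ← h0]
        positivity
      · intro _
        simp [hL, hR, ← h0]
        positivity
    · set x : ℝ := Real.exp (f a) / (p a * σ) with hx
      have hxpos : 0 < x := by positivity
      have hLx : L a = p a * Real.log x := by
        rw [hx, Real.log_div (Real.exp_ne_zero _) (by positivity),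
          Real.log_mul (ne_of_gt h0) (ne_of_gt hσ), Real.log_exp]
        ring
      have hRx : R a = p a * (x - 1) := by
        rw [hR, hx]; field_simp
      constructor
      · rw [hLx, hRx]
        exact mul_le_mul_of_nonneg_left (Real.log_le_sub_one_of_pos hxpos) (le_of_lt h0)
      · intro hne
        have hx1 : x ≠ 1 := by
          intro h1
          apply hne
          have : Real.exp (f a) = p a * σ := by
            rw [hx, div_eq_one_iff_eq (by positivity)] at h1; linarith [h1]
          rw [this]; field_simp
        rw [hLx, hRx]
        exact mul_lt_mul_of_pos_left (Real.log_lt_sub_one_of_pos hxpos hx1) h0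
  have hsumR : ∑ a, R a = 0 := by
    simp only [hR, Finset.sum_sub_distrib, ← Finset.sum_div, hs, ← hσdef]
    rw [div_self (ne_of_gt hσ)]; ring
  have hsumL : ∑ a, L a =
      (∑ a, p a * f a) + (-∑ a, p a * Real.log (p a)) - Real.log σ := by
    simp [hL, Finset.sum_sub_distrib, ← Finset.sum_mul, hs]
    ring
  have hle : ∑ a, L a ≤ ∑ a, R a := Finset.sum_le_sum fun a _ => (key a).1
  constructor
  · rw [hsumR, hsumL] at hle; linarith
  · intro heq a
    by_contra hne
    have : ∑ a, L a < ∑ a, R a :=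
      Finset.sum_lt_sum (fun a _ => (key a).1) ⟨a, mem_univ a, (key a).2 hne⟩
    rw [hsumR, hsumL, heq] at this
    linarith

lemma softmax_props {A : Type*} [Fintype A] [Nonempty A] (f : A → ℝ) :
    (∀ a, 0 ≤ Real.exp (f a) / ∑ b, Real.exp (f b)) ∧
    (∑ a, Real.exp (f a) / ∑ b, Real.exp (f b)) = 1 ∧
    (∑ a, (Real.exp (f a) / ∑ b, Real.exp (f b)) * f a) +
      (-∑ a, (Real.exp (f a) / ∑ b, Real.exp (f b)) *
        Real.log (Real.exp (f a) / ∑ b, Real.exp (f b))) =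
      Real.log (∑ a, Real.exp (f a)) := by
  set σ : ℝ := ∑ a, Real.exp (f a) with hσdef
  have hσ : 0 < σ := Finset.sum_pos (fun a _ => Real.exp_pos _) univ_nonempty
  have hσne := ne_of_gt hσ
  refine ⟨fun a => by positivity, ?_, ?_⟩
  · rw [← Finset.sum_div, div_self hσne]
  · have hlog : ∀ a, Real.log (Real.exp (f a) / σ) = f a - Real.log σ := by
      intro a
      rw [Real.log_div (Real.exp_ne_zero _) hσne, Real.log_exp]
    have hsum1 : (∑ a, Real.exp (f a) / σ) = 1 := by
      rw [← Finset.sum_div, div_self hσne]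
    calc (∑ a, (Real.exp (f a) / σ) * f a) +
          (-∑ a, (Real.exp (f a) / σ) * Real.log (Real.exp (f a) / σ))
        = (∑ a, (Real.exp (f a) / σ) * f a) +
          (-∑ a, ((Real.exp (f a) / σ) * f a - (Real.exp (f a) / σ) * Real.log σ)) := by
          congr 2
          refine Finset.sum_congr rfl fun a _ => ?_
          rw [hlog a]; ring
      _ = (∑ a, (Real.exp (f a) / σ)) * Real.log σ := by
          rw [Finset.sum_sub_distrib, ← Finset.sum_mul]
          ring
      _ = Real.log σ := by rw [hsum1, one_mul]


/-- Equivalence of the KL-greedy and entropy-greedy steps: the KL-greedy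
iterate `π_{k+1}` is the unique maximizer of `π ↦ ⟨π, h_k⟩(s) + (1/Z_k) H(π)(s)` over
distributions on `A`, and equals the softmax of `Z_k h_k`. -/
theorem klgreedy_equals_entropy_greedy
    {S A : Type*} [Fintype S] [Fintype A] [Nonempty S] [Nonempty A]
    (lam : ℕ → ℝ) (hlam : ∀ k, 0 < lam k)
    (η : ℕ → ℝ) (hη : ∀ k, η k = 1 / lam k)
    (Z : ℕ → ℝ) (hZ : ∀ k, Z k = ∑ j ∈ Finset.range (k + 1), η j)
    (q : ℕ → S → A → ℝ)
    (π : ℕ → S → A → ℝ)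
    (hπ0 : ∀ s a, π 0 s a = 1 / (Fintype.card A : ℝ))
    (hπ : ∀ j s a, π (j + 1) s a =
      π j s a * Real.exp (η j * q j s a) / ∑ b, π j s b * Real.exp (η j * q j s b))
    (h : ℕ → S → A → ℝ)
    (hh : ∀ k s a, h k s a = (1 / Z k) * ∑ j ∈ Finset.range (k + 1), η j * q j s a) :
    ∀ k s,
      ((∀ p : A → ℝ, (∀ a, 0 ≤ p a) → (∑ a, p a = 1) →
        (∑ a, p a * h k s a) + (1 / Z k) * (-∑ a, p a * Real.log (p a)) ≤
          (∑ a, π (k + 1) s a * h k s a)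
            + (1 / Z k) * (-∑ a, π (k + 1) s a * Real.log (π (k + 1) s a)) ∧
        ((∑ a, p a * h k s a) + (1 / Z k) * (-∑ a, p a * Real.log (p a)) =
          (∑ a, π (k + 1) s a * h k s a)
            + (1 / Z k) * (-∑ a, π (k + 1) s a * Real.log (π (k + 1) s a)) →
          p = fun a => π (k + 1) s a)) ∧
      (∀ a, π (k + 1) s a =
        Real.exp (Z k * h k s a) / ∑ b, Real.exp (Z k * h k s b))) := by
  have hπform : ∀ k s a, π k s a =
      Real.exp (∑ j ∈ Finset.range k, η j * q j s a) /
        ∑ b, Real.exp (∑ j ∈ Finset.range k, η j * q j s b) := by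
    intro k
    induction k with
    | zero =>
      intro s a
      simp [hπ0, Finset.card_univ]
    | succ k ih =>
      intro s a
      have hE : (0:ℝ) < ∑ b, Real.exp (∑ j ∈ Finset.range k, η j * q j s b) :=
        Finset.sum_pos (fun b _ => Real.exp_pos _) univ_nonempty
      set E : ℝ := ∑ b, Real.exp (∑ j ∈ Finset.range k, η j * q j s b) with hEdef
      have step : ∀ b, π k s b * Real.exp (η k * q k s b) =
          Real.exp (∑ j ∈ Finset.range (k + 1), η j * q j s b) / E := by
        intro b
        rw [ih s b, Finset.sum_range_succ, Real.exp_add]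
        ring
      have hN : (0:ℝ) < ∑ b, Real.exp (∑ j ∈ Finset.range (k + 1), η j * q j s b) :=
        Finset.sum_pos (fun b _ => Real.exp_pos _) univ_nonempty
      rw [hπ k s a]
      simp only [step, ← Finset.sum_div]
      rw [div_div_div_eq, mul_comm _ E, mul_div_mul_left _ _ (ne_of_gt hE)]
  intro k s
  have hZpos : 0 < Z k := by
    rw [hZ]
    exact Finset.sum_pos (fun j _ => by rw [hη]; exact one_div_pos.mpr (hlam j)) (by simp)
  have hZne := ne_of_gt hZpos
  set f : A → ℝ := fun a => Z k * h k s a with hf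
  have hfW : ∀ a, f a = ∑ j ∈ Finset.range (k + 1), η j * q j s a := by
    intro a; rw [hf]; simp only [hh]; field_simp
  have part2 : ∀ a, π (k + 1) s a = Real.exp (f a) / ∑ b, Real.exp (f b) := by
    intro a
    rw [hπform (k + 1) s a]
    simp only [hfW]
  have hobj : ∀ r : A → ℝ,
      (∑ a, r a * h k s a) + (1 / Z k) * (-∑ a, r a * Real.log (r a)) =
      (1 / Z k) * ((∑ a, r a * f a) + (-∑ a, r a * Real.log (r a))) := by
    intro r
    rw [mul_add]
    congr 1
    rw [Finset.mul_sum]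
    refine Finset.sum_congr rfl fun a _ => ?_
    have hha : h k s a = (1 / Z k) * f a := by rw [hf]; field_simp
    rw [hha]; ring
  obtain ⟨-, -, hval⟩ := softmax_props f
  have hobjπ : (∑ a, π (k + 1) s a * h k s a)
      + (1 / Z k) * (-∑ a, π (k + 1) s a * Real.log (π (k + 1) s a)) =
      (1 / Z k) * Real.log (∑ a, Real.exp (f a)) := by
    rw [hobj]
    congr 1
    simp only [part2]
    exact hval
  refine ⟨fun p hp0 hps => ?_, part2⟩
  obtain ⟨hle, heqc⟩ := gibbs_aux f p hp0 hps
  constructor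
  · rw [hobjπ, hobj p]
    exact mul_le_mul_of_nonneg_left hle (by positivity)
  · intro heq
    rw [hobjπ, hobj p] at heq
    have hX : (∑ a, p a * f a) + (-∑ a, p a * Real.log (p a)) =
        Real.log (∑ a, Real.exp (f a)) :=
      mul_left_cancel₀ (by positivity : (1:ℝ)/Z k ≠ 0) heq
    funext a
    rw [heqc hX a, part2 a]
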